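/- For 0<q<1, every integer N ≥ 0, and real t, the bound |Γ_q(-N-1/2+it) Γ_q(N+3/2-it)| ≤ q^{N(N+2)/2} · ((-q^{1/2};q)_∞/(q^{1/2};q)_∞) · |Γ_q(1/2+it)Γ_q(3/2-it)| holds. -/

import Mathlib

open Complex Filter

noncomputable def qPochInf (a : ℂ) (q : ℝ) : ℂ := ∏' k : ℕ, (1 - a * (q : ℂ) ^ k)

noncomputable def qPoch (a : ℂ) (q : ℝ) (n : ℕ) : ℂ := ∏ k ∈ Finset.range n, (1 - a * (q : ℂ) ^ k)

noncomputable def qGamma (q : ℝ) (s : ℂ) : ℂ :=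
  qPochInf (q : ℂ) q / qPochInf ((q : ℂ) ^ s) q * ((1 : ℂ) - (q : ℂ)) ^ (1 - s)

noncomputable def Kq (q : ℝ) (s : ℂ) : ℂ :=
  qPochInf (-(q : ℂ)) q * qPochInf (-1) q * qPochInf (q : ℂ) q /
    (qPochInf (-(q : ℂ) ^ s) q * qPochInf (-(q : ℂ) ^ (1 - s)) q)

noncomputable def qMellin (q : ℝ) (f : ℝ → ℂ) (s : ℂ) : ℂ :=
  (1 - (q : ℂ)) * ∑' n : ℤ, f (q ^ n) * (q : ℂ) ^ ((n : ℂ) * s)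

noncomputable def qFact (q : ℝ) (n : ℕ) : ℂ := qPoch (q : ℂ) q n / ((1 : ℂ) - (q : ℂ)) ^ n

-- complex log summability
lemma summable_clog (q : ℝ) (hq : 0 < q) (hq1 : q < 1) (w : ℂ) (hw : ‖w‖ < 1) :
    Summable fun k : ℕ => Complex.log (1 - w * (q:ℂ)^k) := by
  have hn : ∀ k : ℕ, ‖-(w * (q:ℂ)^k)‖ = ‖w‖ * q ^ k := by
    intro k
    rw [norm_neg, norm_mul, norm_pow, Complex.norm_real, Real.norm_eq_abs, abs_of_pos hq]
  have hle : ∀ k : ℕ, ‖w‖ * q ^ k ≤ ‖w‖ := by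
    intro k
    have : q ^ k ≤ 1 := pow_le_one₀ hq.le hq1.le
    nlinarith [norm_nonneg w]
  apply Summable.of_norm_bounded
    (g := fun k => (‖w‖ * (1 - ‖w‖)⁻¹ / 2 + 1) * (‖w‖ * q ^ k))
  · exact ((summable_geometric_of_lt_one hq.le hq1).mul_left _).mul_left _
  · intro k
    have hz : ‖-(w * (q:ℂ)^k)‖ < 1 := by rw [hn k]; exact lt_of_le_of_lt (hle k) hw
    have h1 : ‖Complex.log (1 - w * (q:ℂ)^k)‖ ≤
        ‖-(w * (q:ℂ)^k)‖ ^ 2 * (1 - ‖-(w * (q:ℂ)^k)‖)⁻¹ / 2 + ‖-(w * (q:ℂ)^k)‖ := by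
      have := Complex.norm_log_one_add_le hz
      simpa [sub_eq_add_neg] using this
    rw [hn] at h1 hz
    refine h1.trans ?_
    have hwq : 0 ≤ ‖w‖ * q ^ k := by positivity
    have hinv : (1 - ‖w‖ * q ^ k)⁻¹ ≤ (1 - ‖w‖)⁻¹ := by
      apply inv_anti₀ <;> nlinarith [hle k]
    have hsq : (‖w‖ * q ^ k) ^ 2 ≤ ‖w‖ * (‖w‖ * q ^ k) := by nlinarith [hle k]
    have hposinv : (0:ℝ) ≤ (1 - ‖w‖ * q ^ k)⁻¹ := by
      apply inv_nonneg.2; nlinarith [hle k]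
    calc (‖w‖ * q ^ k) ^ 2 * (1 - ‖w‖ * q ^ k)⁻¹ / 2 + ‖w‖ * q ^ k
        ≤ (‖w‖ * (‖w‖ * q ^ k)) * (1 - ‖w‖)⁻¹ / 2 + ‖w‖ * q ^ k := by
          gcongr
      _ = (‖w‖ * (1 - ‖w‖)⁻¹ / 2 + 1) * (‖w‖ * q ^ k) := by ring

lemma factor_ne_zero (q : ℝ) (hq : 0 < q) (hq1 : q < 1) (w : ℂ) (hw : ‖w‖ < 1) (k : ℕ) :
    (1 : ℂ) - w * (q:ℂ)^k ≠ 0 := by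
  intro h
  have h2 : w * (q:ℂ)^k = 1 := by linear_combination -h
  have : ‖w * (q:ℂ)^k‖ < 1 := by
    rw [norm_mul, norm_pow, Complex.norm_real, Real.norm_eq_abs, abs_of_pos hq]
    calc ‖w‖ * q ^ k ≤ ‖w‖ * 1 := by
          have : q ^ k ≤ 1 := pow_le_one₀ hq.le hq1.le
          nlinarith [norm_nonneg w]
      _ < 1 := by rwa [mul_one]
  rw [h2, norm_one] at this
  exact lt_irrefl 1 this

lemma multipliable_small (q : ℝ) (hq : 0 < q) (hq1 : q < 1) (w : ℂ) (hw : ‖w‖ < 1) :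
    Multipliable fun k : ℕ => 1 - w * (q:ℂ)^k := by
  have := Complex.hasProd_of_hasSum_log (f := fun k : ℕ => 1 - w * (q:ℂ)^k)
    (fun k => factor_ne_zero q hq hq1 w hw k)
    (summable_clog q hq hq1 w hw).hasSum
  exact ⟨_, this⟩

lemma qPochInf_ne_zero (q : ℝ) (hq : 0 < q) (hq1 : q < 1) (w : ℂ) (hw : ‖w‖ < 1) :
    qPochInf w q ≠ 0 := by
  have := Complex.cexp_tsum_eq_tprod (f := fun k : ℕ => 1 - w * (q:ℂ)^k)
    (fun k => factor_ne_zero q hq hq1 w hw k)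
    (summable_clog q hq hq1 w hw)
  rw [qPochInf, ← this]
  exact Complex.exp_ne_zero _

section RealSide

variable {q c : ℝ}

lemma summable_rlogp (hq : 0 < q) (hq1 : q < 1) (hc : 0 ≤ c) (hc1 : c < 1) :
    Summable fun k : ℕ => Real.log (1 + c * q ^ k) := by
  apply Summable.of_nonneg_of_le (f := fun k => c * q ^ k)
  · intro k
    apply Real.log_nonneg
    nlinarith [pow_nonneg hq.le k]
  · intro k
    have h0 : (0:ℝ) < 1 + c * q ^ k := by nlinarith [pow_nonneg hq.le k]
    have := Real.log_le_sub_one_of_pos h0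
    linarith
  · exact (summable_geometric_of_lt_one hq.le hq1).mul_left _

lemma rfactor_pos (hq : 0 < q) (hq1 : q < 1) (hc : 0 ≤ c) (hc1 : c < 1) (k : ℕ) :
    0 < 1 - c * q ^ k := by
  have h1 : q ^ k ≤ 1 := pow_le_one₀ hq.le hq1.le
  nlinarith [pow_nonneg hq.le k]

lemma summable_rlogm (hq : 0 < q) (hq1 : q < 1) (hc : 0 ≤ c) (hc1 : c < 1) :
    Summable fun k : ℕ => Real.log (1 - c * q ^ k) := by
  rw [← summable_neg_iff]
  apply Summable.of_nonneg_of_le (f := fun k => (1 - c)⁻¹ * (c * q ^ k))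
  · intro k
    simp only [neg_nonneg]
    apply Real.log_nonpos
    · nlinarith [pow_nonneg hq.le k, rfactor_pos hq hq1 hc hc1 k]
    · nlinarith [pow_nonneg hq.le k]
  · intro k
    have hp := rfactor_pos hq hq1 hc hc1 k
    have h1 : q ^ k ≤ 1 := pow_le_one₀ hq.le hq1.le
    have h2 : -Real.log (1 - c * q ^ k) = Real.log (1 - c * q ^ k)⁻¹ := by
      rw [Real.log_inv]
    rw [h2]
    have h3 := Real.log_le_sub_one_of_pos (inv_pos.2 hp)
    have h4 : (1 - c * q ^ k)⁻¹ - 1 = (c * q ^ k) / (1 - c * q ^ k) := by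
      field_simp
      ring
    have h5 : (c * q ^ k) / (1 - c * q ^ k) ≤ (1 - c)⁻¹ * (c * q ^ k) := by
      rw [div_le_iff₀ hp, mul_comm ((1-c)⁻¹) _, mul_assoc]
      have h6 : (1:ℝ) ≤ (1 - c)⁻¹ * (1 - c * q ^ k) := by
        rw [← div_eq_inv_mul, le_div_iff₀ (by linarith)]
        nlinarith [pow_nonneg hq.le k]
      nlinarith [mul_le_mul_of_nonneg_left h6 (mul_nonneg hc (pow_nonneg hq.le k))]
    linarith
  · exact ((summable_geometric_of_lt_one hq.le hq1).mul_left _).mul_left _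

lemma hasProd_exp {f : ℕ → ℝ} (hpos : ∀ k, 0 < f k)
    (hs : Summable fun k => Real.log (f k)) :
    HasProd f (Real.exp (∑' k, Real.log (f k))) := by
  have h := hs.hasSum.rexp
  have h2 : (Real.exp ∘ fun k => Real.log (f k)) = f :=
    funext fun k => Real.exp_log (hpos k)
  rwa [h2] at h

lemma tprod_p_eq (hq : 0 < q) (hq1 : q < 1) (hc : 0 ≤ c) (hc1 : c < 1) :
    (∏' k : ℕ, (1 + c * q ^ k)) =
      Real.exp (∑' k : ℕ, Real.log (1 + c * q ^ k)) :=
  (hasProd_exp (fun k => by nlinarith [pow_nonneg hq.le k])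
    (summable_rlogp hq hq1 hc hc1)).tprod_eq

lemma tprod_m_eq (hq : 0 < q) (hq1 : q < 1) (hc : 0 ≤ c) (hc1 : c < 1) :
    (∏' k : ℕ, (1 - c * q ^ k)) =
      Real.exp (∑' k : ℕ, Real.log (1 - c * q ^ k)) :=
  (hasProd_exp (rfactor_pos hq hq1 hc hc1)
    (summable_rlogm hq hq1 hc hc1)).tprod_eq

lemma prod_le_tprod_p (hq : 0 < q) (hq1 : q < 1) (hc : 0 ≤ c) (hc1 : c < 1) (n : ℕ) :
    (∏ k ∈ Finset.range n, (1 + c * q ^ k)) ≤ ∏' k : ℕ, (1 + c * q ^ k) := by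
  have hprodeq : (∏ k ∈ Finset.range n, (1 + c * q ^ k)) =
      Real.exp (∑ k ∈ Finset.range n, Real.log (1 + c * q ^ k)) := by
    rw [Real.exp_sum]
    exact Finset.prod_congr rfl fun k _ =>
      (Real.exp_log (by nlinarith [pow_nonneg hq.le k])).symm
  rw [hprodeq, tprod_p_eq hq hq1 hc hc1]
  apply Real.exp_le_exp.2
  apply Summable.sum_le_tsum
  · intro k _
    apply Real.log_nonneg
    nlinarith [pow_nonneg hq.le k]
  · exact summable_rlogp hq hq1 hc hc1

lemma tprod_m_le_prod (hq : 0 < q) (hq1 : q < 1) (hc : 0 ≤ c) (hc1 : c < 1) (n : ℕ) :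
    (∏' k : ℕ, (1 - c * q ^ k)) ≤ ∏ k ∈ Finset.range n, (1 - c * q ^ k) := by
  have hprodeq : (∏ k ∈ Finset.range n, (1 - c * q ^ k)) =
      Real.exp (∑ k ∈ Finset.range n, Real.log (1 - c * q ^ k)) := by
    rw [Real.exp_sum]
    exact Finset.prod_congr rfl fun k _ =>
      (Real.exp_log (rfactor_pos hq hq1 hc hc1 k)).symm
  rw [hprodeq, tprod_m_eq hq hq1 hc hc1]
  apply Real.exp_le_exp.2
  have h := Summable.sum_le_tsum (f := fun k => -Real.log (1 - c * q ^ k)) (Finset.range n)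
    (fun k _ => by
      simp only [neg_nonneg]
      apply Real.log_nonpos
      · nlinarith [pow_nonneg hq.le k, rfactor_pos hq hq1 hc hc1 k]
      · nlinarith [pow_nonneg hq.le k])
    ((summable_rlogm hq hq1 hc hc1).neg)
  rw [tsum_neg, Finset.sum_neg_distrib] at h
  linarith

lemma tprod_m_pos (hq : 0 < q) (hq1 : q < 1) (hc : 0 ≤ c) (hc1 : c < 1) :
    0 < ∏' k : ℕ, (1 - c * q ^ k) := by
  rw [tprod_m_eq hq hq1 hc hc1]; exact Real.exp_pos _

end RealSide

set_option maxHeartbeats 1000000 in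
theorem qGamma_product_bound (q : ℝ) (hq : 0 < q) (hq1 : q < 1) (N : ℕ) (t : ℝ) :
    ‖qGamma q (-(N : ℂ) - 1/2 + (t : ℂ) * I) * qGamma q ((N : ℂ) + 3/2 - (t : ℂ) * I)‖ ≤
      q ^ ((N ^ 2 + 2 * N : ℝ) / 2) *
        ((∏' k : ℕ, (1 + Real.sqrt q * q ^ k)) / (∏' k : ℕ, (1 - Real.sqrt q * q ^ k))) *
        ‖qGamma q (1/2 + (t : ℂ) * I) * qGamma q (3/2 - (t : ℂ) * I)‖ := by
  have hQ0 : (q : ℂ) ≠ 0 := Complex.ofReal_ne_zero.2 hq.ne'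
  set Q : ℂ := (q : ℂ) with hQdef
  set c : ℝ := Real.sqrt q with hcdef
  have hcr : c = q ^ (1/2 : ℝ) := Real.sqrt_eq_rpow q
  have hc0 : 0 ≤ c := Real.sqrt_nonneg q
  have hc1 : c < 1 := by
    rw [hcr]; exact Real.rpow_lt_one hq.le hq1 (by norm_num)
  set s0 : ℂ := 1/2 + (t : ℂ) * I with hs0def
  set s3 : ℂ := 3/2 - (t : ℂ) * I with hs3def
  set s1 : ℂ := -(N : ℂ) - 1/2 + (t : ℂ) * I with hs1def
  set s2 : ℂ := (N : ℂ) + 3/2 - (t : ℂ) * I with hs2def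
  -- real parts
  have hres0 : s0.re = 1/2 := by simp [hs0def]
  have hres1 : s1.re = -(N : ℝ) - 1/2 := by simp [hs1def]
  have hres2 : s2.re = (N : ℝ) + 3/2 := by simp [hs2def]
  have hres3 : s3.re = 3/2 := by simp [hs3def]
  -- norms of cpow
  have hnQ : ∀ s : ℂ, ‖Q ^ s‖ = q ^ s.re := by
    intro s
    rw [hQdef, Complex.norm_cpow_eq_rpow_re_of_pos hq]
  have hnQk : ‖Q‖ = q := by
    rw [hQdef, Complex.norm_real, Real.norm_eq_abs, abs_of_pos hq]
  -- small norms
  have hn0 : ‖Q ^ s0‖ < 1 := by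
    rw [hnQ, hres0]; exact Real.rpow_lt_one hq.le hq1 (by norm_num)
  have hn2 : ‖Q ^ s2‖ < 1 := by
    rw [hnQ, hres2]
    apply Real.rpow_lt_one hq.le hq1
    positivity
  have hn3 : ‖Q ^ s3‖ < 1 := by
    rw [hnQ, hres3]; exact Real.rpow_lt_one hq.le hq1 (by norm_num)
  have hnq1 : ‖Q‖ < 1 := by rw [hnQk]; exact hq1
  -- multipliable instances
  have m0 : Multipliable fun k : ℕ => 1 - Q ^ s0 * Q ^ k := multipliable_small q hq hq1 _ hn0
  have m2 : Multipliable fun k : ℕ => 1 - Q ^ s2 * Q ^ k := multipliable_small q hq hq1 _ hn2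
  -- shift identities
  have hcp1 : Q ^ s1 * Q ^ (N + 1 : ℕ) = Q ^ s0 := by
    rw [← Complex.cpow_natCast Q (N + 1), ← Complex.cpow_add _ _ hQ0]
    congr 1
    push_cast
    rw [hs1def, hs0def]; ring
  have hcp3 : Q ^ s3 * Q ^ (N : ℕ) = Q ^ s2 := by
    rw [← Complex.cpow_natCast Q N, ← Complex.cpow_add _ _ hQ0]
    congr 1
    rw [hs3def, hs2def]; ring
  have hshift1 : ∀ k : ℕ, (1 : ℂ) - Q ^ s1 * Q ^ (k + (N + 1)) = 1 - Q ^ s0 * Q ^ k := by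
    intro k
    rw [pow_add, ← mul_assoc, mul_comm (Q ^ s1) (Q ^ k), mul_assoc, hcp1, mul_comm (Q^k) _]
  have hshift3 : ∀ k : ℕ, (1 : ℂ) - Q ^ s3 * Q ^ (k + N) = 1 - Q ^ s2 * Q ^ k := by
    intro k
    rw [pow_add, ← mul_assoc, mul_comm (Q ^ s3) (Q ^ k), mul_assoc, hcp3, mul_comm (Q^k) _]
  set F1 : ℂ := ∏ k ∈ Finset.range (N + 1), (1 - Q ^ s1 * Q ^ k) with hF1def
  set F3 : ℂ := ∏ k ∈ Finset.range N, (1 - Q ^ s3 * Q ^ k) with hF3def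
  -- splitting identities
  have E1 : qPochInf (Q ^ s1) q = F1 * qPochInf (Q ^ s0) q := by
    rw [qPochInf, qPochInf, hF1def]
    simp only [← hQdef]
    rw [← Multipliable.prod_mul_tprod_nat_mul' (f := fun k => 1 - Q ^ s1 * Q ^ k) (k := N + 1)
      (by exact (m0.congr (fun k => (hshift1 k).symm)) : Multipliable fun k : ℕ => 1 - Q ^ s1 * Q ^ (k + (N + 1)))]
    congr 1
    exact tprod_congr fun k => hshift1 k
  have E3 : qPochInf (Q ^ s3) q = F3 * qPochInf (Q ^ s2) q := by
    rw [qPochInf, qPochInf, hF3def]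
    simp only [← hQdef]
    rw [← Multipliable.prod_mul_tprod_nat_mul' (f := fun k => 1 - Q ^ s3 * Q ^ k) (k := N)
      (by exact (m2.congr (fun k => (hshift3 k).symm)) : Multipliable fun k : ℕ => 1 - Q ^ s3 * Q ^ (k + N))]
    congr 1
    exact tprod_congr fun k => hshift3 k
  -- nonvanishing
  have hP0 : qPochInf (Q ^ s0) q ≠ 0 := qPochInf_ne_zero q hq hq1 _ hn0
  have hP2 : qPochInf (Q ^ s2) q ≠ 0 := qPochInf_ne_zero q hq hq1 _ hn2
  have hF1factor : ∀ k : ℕ, k < N + 1 → (1 : ℂ) - Q ^ s1 * Q ^ k ≠ 0 := by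
    intro k hk h
    have h2 : Q ^ s1 * Q ^ k = 1 := by linear_combination -h
    have h3 : ‖Q ^ s1 * Q ^ k‖ = q ^ ((k : ℝ) - N - 1/2) := by
      rw [norm_mul, hnQ, hres1, norm_pow, hnQk, ← Real.rpow_natCast q k,
        ← Real.rpow_add hq]
      congr 1; ring
    have h4 : (1 : ℝ) < q ^ ((k : ℝ) - N - 1/2) := by
      rw [Real.one_lt_rpow_iff_of_pos hq]
      right
      refine ⟨hq1, ?_⟩
      have hkN : (k : ℝ) ≤ N := by exact_mod_cast Nat.lt_succ_iff.1 hk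
      linarith
    rw [h2, norm_one] at h3
    rw [← h3] at h4
    exact lt_irrefl 1 h4
  have hF1ne : F1 ≠ 0 := by
    rw [hF1def]
    exact Finset.prod_ne_zero_iff.2 fun k hk => hF1factor k (Finset.mem_range.1 hk)
  have hF3ne : F3 ≠ 0 := by
    rw [hF3def]
    refine Finset.prod_ne_zero_iff.2 fun k hk => ?_
    intro h
    have h2 : Q ^ s3 * Q ^ k = 1 := by linear_combination -h
    have h3 : ‖Q ^ s3 * Q ^ k‖ < 1 := by
      rw [norm_mul]
      calc ‖Q ^ s3‖ * ‖Q ^ k‖ ≤ ‖Q ^ s3‖ * 1 := by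
            apply mul_le_mul_of_nonneg_left _ (norm_nonneg _)
            rw [norm_pow, hnQk]
            exact pow_le_one₀ hq.le hq1.le
        _ < 1 := by rw [mul_one]; exact hn3
    rw [h2, norm_one] at h3
    exact lt_irrefl 1 h3
  -- abbreviations
  set A : ℂ := qPochInf Q q with hAdef
  set B0 : ℂ := qPochInf (Q ^ s0) q with hB0def
  set B2 : ℂ := qPochInf (Q ^ s2) q with hB2def
  have h1Q : (1 : ℂ) - Q = ((1 - q : ℝ) : ℂ) := by rw [hQdef]; push_cast; ring
  have h1Q0 : (1 : ℂ) - Q ≠ 0 := by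
    rw [h1Q]
    exact Complex.ofReal_ne_zero.2 (sub_pos.2 hq1).ne'
  have hcpow12 : ((1:ℂ) - Q) ^ (1 - s1) * ((1:ℂ) - Q) ^ (1 - s2) = 1 - Q := by
    rw [← Complex.cpow_add _ _ h1Q0]
    have he : (1 - s1) + (1 - s2) = 1 := by rw [hs1def, hs2def]; ring
    rw [he, Complex.cpow_one]
  have hcpow03 : ((1:ℂ) - Q) ^ (1 - s0) * ((1:ℂ) - Q) ^ (1 - s3) = 1 := by
    rw [← Complex.cpow_add _ _ h1Q0]
    have he : (1 - s0) + (1 - s3) = 0 := by rw [hs0def, hs3def]; ring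
    rw [he, Complex.cpow_zero]
  have e1 : qGamma q s1 * qGamma q s2 = (A * A / (F1 * B0 * B2)) * (1 - Q) := by
    rw [qGamma, qGamma]
    simp only [← hQdef, ← hAdef, ← hB0def, ← hB2def]
    rw [E1]
    rw [show A / (F1 * B0) * ((1:ℂ)-Q) ^ (1 - s1) * (A / B2 * ((1:ℂ)-Q) ^ (1 - s2))
        = A * A / (F1 * B0 * B2) * (((1:ℂ)-Q) ^ (1 - s1) * ((1:ℂ)-Q) ^ (1 - s2)) from by ring,
      hcpow12]
  have e2 : qGamma q s0 * qGamma q s3 = A * A / (B0 * (F3 * B2)) := by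
    rw [qGamma, qGamma]
    simp only [← hQdef, ← hAdef, ← hB0def, ← hB2def]
    rw [E3]
    rw [show A / B0 * ((1:ℂ)-Q) ^ (1 - s0) * (A / (F3 * B2) * ((1:ℂ)-Q) ^ (1 - s3))
        = A * A / (B0 * (F3 * B2)) * (((1:ℂ)-Q) ^ (1 - s0) * ((1:ℂ)-Q) ^ (1 - s3)) from by ring,
      hcpow03, mul_one]
  have hGam : qGamma q s1 * qGamma q s2 = ((1 - Q) * F3 / F1) * (qGamma q s0 * qGamma q s3) := by
    rw [e1, e2]
    field_simp
  -- norm of the constant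
  have hnC : ‖(1 - Q) * F3 / F1‖ = (1 - q) * ‖F3‖ / ‖F1‖ := by
    rw [norm_div, norm_mul, h1Q, Complex.norm_real, Real.norm_eq_abs,
      abs_of_pos (by linarith : (0:ℝ) < 1 - q)]
  -- upper bound for ‖F3‖
  have hnF3 : ‖F3‖ ≤ ∏ k ∈ Finset.range N, (1 + c * q ^ k) := by
    rw [hF3def, norm_prod]
    apply Finset.prod_le_prod (fun k _ => norm_nonneg _)
    intro k _
    calc ‖(1:ℂ) - Q ^ s3 * Q ^ k‖ ≤ ‖(1:ℂ)‖ + ‖Q ^ s3 * Q ^ k‖ := norm_sub_le _ _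
      _ = 1 + q ^ (3/2 : ℝ) * q ^ k := by rw [norm_one, norm_mul, hnQ, hres3, norm_pow, hnQk]
      _ ≤ 1 + c * q ^ k := by
          have h32 : q ^ (3/2 : ℝ) ≤ c := by
            rw [hcr]
            exact Real.rpow_le_rpow_of_exponent_ge hq hq1.le (by norm_num)
          nlinarith [pow_nonneg hq.le k]
  -- lower bound for ‖F1‖
  have hPMpos : 0 < ∏ m ∈ Finset.range (N+1), (1 - c * q ^ m) :=
    Finset.prod_pos fun m _ => rfactor_pos hq hq1 hc0 hc1 m
  have hsum : ∑ k ∈ Finset.range (N+1), ((k:ℝ) - N - 1/2) = -(((N:ℝ)+1)^2/2) := by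
    have h2 : (∑ i ∈ Finset.range (N+1), (i:ℝ)) = (N:ℝ) * ((N:ℝ)+1) / 2 := by
      have h3 := Finset.sum_range_id_mul_two (N+1)
      have h3' : (∑ i ∈ Finset.range (N+1), i) * 2 = (N+1) * N := by simpa using h3
      have h4 : (∑ i ∈ Finset.range (N+1), (i:ℝ)) * 2 = ((N:ℝ)+1) * N := by
        have := congrArg (Nat.cast : ℕ → ℝ) h3'
        push_cast at this
        linarith
      linear_combination h4 / 2
    rw [Finset.sum_sub_distrib, Finset.sum_sub_distrib, Finset.sum_const, Finset.sum_const,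
      Finset.card_range, h2]
    push_cast
    ring
  have hnF1 : q ^ (-(((N:ℝ)+1)^2/2)) * ∏ m ∈ Finset.range (N+1), (1 - c * q ^ m) ≤ ‖F1‖ := by
    rw [hF1def, norm_prod]
    have heq : q ^ (-(((N:ℝ)+1)^2/2)) * ∏ m ∈ Finset.range (N+1), (1 - c * q ^ m)
        = ∏ k ∈ Finset.range (N+1), (q ^ ((k:ℝ) - N - 1/2) * (1 - c * q ^ (N - k))) := by
      rw [Finset.prod_mul_distrib, ← hsum, Real.rpow_sum_of_pos hq]
      congr 1
      exact (Finset.prod_range_reflect (fun j => 1 - c * q ^ j) (N+1)).symm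
    rw [heq]
    apply Finset.prod_le_prod
    · intro k hk
      have := rfactor_pos hq hq1 hc0 hc1 (N - k)
      positivity
    · intro k hk
      have hkN : k ≤ N := Nat.lt_succ_iff.1 (Finset.mem_range.1 hk)
      have hnorm : ‖Q ^ s1 * Q ^ k‖ = q ^ ((k:ℝ) - N - 1/2) := by
        rw [norm_mul, hnQ, hres1, norm_pow, hnQk, ← Real.rpow_natCast q k,
          ← Real.rpow_add hq]
        congr 1; ring
      have hx : q ^ ((k:ℝ) - N - 1/2) * (c * q ^ (N - k)) = 1 := by
        rw [hcr, ← Real.rpow_natCast q (N - k), Nat.cast_sub hkN,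
          ← Real.rpow_add hq, ← Real.rpow_add hq, ← Real.rpow_zero q]
        congr 1
        ring
      have hlb : ‖Q ^ s1 * Q ^ k‖ - 1 ≤ ‖(1:ℂ) - Q ^ s1 * Q ^ k‖ := by
        have h5 := norm_sub_norm_le (Q ^ s1 * Q ^ k) 1
        rw [norm_one, norm_sub_rev] at h5
        exact h5
      rw [hnorm] at hlb
      calc q ^ ((k:ℝ) - N - 1/2) * (1 - c * q ^ (N - k))
          = q ^ ((k:ℝ) - N - 1/2) - 1 := by rw [mul_sub, mul_one, hx]
        _ ≤ ‖(1:ℂ) - Q ^ s1 * Q ^ k‖ := hlb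
  have hnF1pos : 0 < ‖F1‖ := by
    calc (0:ℝ) < q ^ (-(((N:ℝ)+1)^2/2)) * ∏ m ∈ Finset.range (N+1), (1 - c * q ^ m) := by
          positivity
      _ ≤ ‖F1‖ := hnF1
  -- real infinite product facts
  have hTM : 0 < ∏' k : ℕ, (1 - c * q ^ k) := tprod_m_pos hq hq1 hc0 hc1
  have hTMle : (∏' k : ℕ, (1 - c * q ^ k)) ≤ ∏ m ∈ Finset.range (N+1), (1 - c * q ^ m) :=
    tprod_m_le_prod hq hq1 hc0 hc1 (N+1)
  have hTPge : (∏ k ∈ Finset.range N, (1 + c * q ^ k)) ≤ ∏' k : ℕ, (1 + c * q ^ k) :=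
    prod_le_tprod_p hq hq1 hc0 hc1 N
  have hTP0 : 0 < ∏' k : ℕ, (1 + c * q ^ k) := by
    rw [tprod_p_eq hq hq1 hc0 hc1]; exact Real.exp_pos _
  -- main constant bound
  have hC : ‖(1 - Q) * F3 / F1‖ ≤
      q ^ ((N ^ 2 + 2 * N : ℝ) / 2) *
        ((∏' k : ℕ, (1 + c * q ^ k)) / (∏' k : ℕ, (1 - c * q ^ k))) := by
    rw [hnC, div_le_iff₀ hnF1pos]
    have hhalf : (1:ℝ) ≤ q ^ (-(1:ℝ)/2) := by
      rw [show (-(1:ℝ)/2) = -(1/2 : ℝ) from by norm_num, Real.rpow_neg hq.le]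
      have h12 : q ^ ((1:ℝ)/2) ≤ 1 := Real.rpow_le_one hq.le hq1.le (by norm_num)
      have hpos : (0:ℝ) < q ^ ((1:ℝ)/2) := Real.rpow_pos_of_pos hq _
      rw [show ((1:ℝ)/2) = (2:ℝ)⁻¹ from by norm_num] at h12 hpos ⊢
      exact (one_le_inv₀ hpos).2 h12
    calc (1 - q) * ‖F3‖
        ≤ 1 * (∏' k : ℕ, (1 + c * q ^ k)) := by
          apply mul_le_mul (by linarith) (hnF3.trans hTPge) (norm_nonneg _) zero_le_one
      _ ≤ q ^ (-(1:ℝ)/2) * (∏' k : ℕ, (1 + c * q ^ k)) :=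
          mul_le_mul_of_nonneg_right hhalf hTP0.le
      _ = q ^ ((N ^ 2 + 2 * N : ℝ) / 2) * q ^ (-(((N:ℝ)+1)^2/2)) * (∏' k : ℕ, (1 + c * q ^ k)) := by
          rw [← Real.rpow_add hq]
          congr 2
          push_cast
          ring
      _ = q ^ ((N ^ 2 + 2 * N : ℝ) / 2) *
            ((∏' k : ℕ, (1 + c * q ^ k)) / (∏' k : ℕ, (1 - c * q ^ k))) *
            (q ^ (-(((N:ℝ)+1)^2/2)) * (∏' k : ℕ, (1 - c * q ^ k))) := by
          field_simp
      _ ≤ q ^ ((N ^ 2 + 2 * N : ℝ) / 2) *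
            ((∏' k : ℕ, (1 + c * q ^ k)) / (∏' k : ℕ, (1 - c * q ^ k))) *
            (q ^ (-(((N:ℝ)+1)^2/2)) * ∏ m ∈ Finset.range (N+1), (1 - c * q ^ m)) := by
          have hfac : (0:ℝ) ≤ q ^ ((N ^ 2 + 2 * N : ℝ) / 2) *
              ((∏' k : ℕ, (1 + c * q ^ k)) / (∏' k : ℕ, (1 - c * q ^ k))) := by positivity
          apply mul_le_mul_of_nonneg_left _ hfac
          apply mul_le_mul_of_nonneg_left hTMle (by positivity)
      _ ≤ q ^ ((N ^ 2 + 2 * N : ℝ) / 2) *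
            ((∏' k : ℕ, (1 + c * q ^ k)) / (∏' k : ℕ, (1 - c * q ^ k))) * ‖F1‖ := by
          have hfac : (0:ℝ) ≤ q ^ ((N ^ 2 + 2 * N : ℝ) / 2) *
              ((∏' k : ℕ, (1 + c * q ^ k)) / (∏' k : ℕ, (1 - c * q ^ k))) := by positivity
          exact mul_le_mul_of_nonneg_left hnF1 hfac
  calc ‖qGamma q s1 * qGamma q s2‖
      = ‖(1 - Q) * F3 / F1‖ * ‖qGamma q s0 * qGamma q s3‖ := by rw [hGam, norm_mul]
    _ ≤ q ^ ((N ^ 2 + 2 * N : ℝ) / 2) *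
          ((∏' k : ℕ, (1 + c * q ^ k)) / (∏' k : ℕ, (1 - c * q ^ k))) *
          ‖qGamma q s0 * qGamma q s3‖ :=
        mul_le_mul_of_nonneg_right hC (norm_nonneg _)
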